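/- For the ring of cliques R_{b,q} with b ≥ 3, every vector x ∈ ℝ^{bq} that is zero on all corner vertices and whose entries sum to zero over the set of internal vertices of each block satisfies Âx = −(b−1)^{−1} x; moreover, the subspace of all such vectors has dimension n − 2q = q(b−2). In particular, −1/(b−1) is an eigenvalue of Â of multiplicity at least n − 2q. -/

import Mathlib

open Matrix Finset

/-- Adjacency matrix of the ring of cliques `R_{b,q}`:
`A = I_q ⊗ (1_b 1_bᵀ − I_b) + C_q ⊗ e₁e₁ᵀ`, written entrywise.  Vertices are pairs
`(i, a)` where `i : Fin q` is the block and `a : Fin b` the position within the block;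
`a = 0` is the corner vertex of the block. -/
noncomputable def rocAdj (b q : ℕ) : Matrix (Fin q × Fin b) (Fin q × Fin b) ℝ :=
  Matrix.of fun p r =>
    (if p.1 = r.1 ∧ p.2 ≠ r.2 then (1 : ℝ) else 0) +
    (if ((p.1.val + 1) % q = r.1.val ∨ (r.1.val + 1) % q = p.1.val) ∧
        p.2.val = 0 ∧ r.2.val = 0 then (1 : ℝ) else 0)

/-- Degrees in `R_{b,q}`: the corner of each block has degree `b+1`, internal
vertices have degree `b−1`. -/
noncomputable def rocDeg (b q : ℕ) (p : Fin q × Fin b) : ℝ :=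
  if p.2.val = 0 then (b : ℝ) + 1 else (b : ℝ) - 1

/-- Normalized adjacency matrix `Â = D^{−1/2} A D^{−1/2}` of `R_{b,q}`. -/
noncomputable def rocAhat (b q : ℕ) : Matrix (Fin q × Fin b) (Fin q × Fin b) ℝ :=
  Matrix.diagonal (fun p => 1 / Real.sqrt (rocDeg b q p)) * rocAdj b q *
    Matrix.diagonal (fun p => 1 / Real.sqrt (rocDeg b q p))

/-- Every vector vanishing on all corner vertices and summing to zero
on the internal vertices of each block is an eigenvector of `Â` for the eigenvalue
`−1/(b−1)`; the subspace of all such vectors has dimension `n − 2q = q(b−2)`.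
In particular `−1/(b−1)` is an eigenvalue of `Â` of multiplicity at least `n − 2q`. -/
theorem roc_noise_eigenspace (b q : ℕ) (hb : 3 ≤ b) (hq : 3 ≤ q) :
    (∀ x : Fin q × Fin b → ℝ,
        (∀ (i : Fin q) (a : Fin b), a.val = 0 → x (i, a) = 0) →
        (∀ i : Fin q, ∑ a ∈ Finset.univ.filter (fun a : Fin b => a.val ≠ 0), x (i, a) = 0) →
        (rocAhat b q).mulVec x = (-(1 : ℝ) / ((b : ℝ) - 1)) • x) ∧
    Module.finrank ℝ
      ↥((⨅ i : Fin q, LinearMap.ker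
          ((LinearMap.proj (i, (⟨0, by omega⟩ : Fin b)) : ((Fin q × Fin b) → ℝ) →ₗ[ℝ] ℝ))) ⊓
       (⨅ i : Fin q, LinearMap.ker
          (∑ a ∈ Finset.univ.filter (fun a : Fin b => a.val ≠ 0),
            (LinearMap.proj (i, a) : ((Fin q × Fin b) → ℝ) →ₗ[ℝ] ℝ)))) = q * (b - 2) := by
  constructor
  · intro x h1 h2
    set d : Fin q × Fin b → ℝ := fun p => 1 / Real.sqrt (rocDeg b q p) with hd
    set c : ℝ := 1 / Real.sqrt ((b : ℝ) - 1) with hc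
    have hb1 : (0:ℝ) ≤ (b:ℝ) - 1 := by
      have : (3:ℝ) ≤ (b:ℝ) := by exact_mod_cast hb
      linarith
    have hb1' : ((b:ℝ) - 1) ≠ 0 := by
      have : (3:ℝ) ≤ (b:ℝ) := by exact_mod_cast hb
      linarith
    have hcc : c * c = 1 / ((b:ℝ) - 1) := by
      rw [hc, div_mul_div_comm, one_mul, Real.mul_self_sqrt hb1]
    funext p
    have key : ∀ r : Fin q × Fin b, (rocAhat b q) p r * x r =
        if p.1 = r.1 ∧ p.2 ≠ r.2 ∧ r.2.val ≠ 0 then d p * (c * x r) else 0 := by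
      intro r
      have hent : (rocAhat b q) p r = d p * rocAdj b q p r * d r := by
        rw [rocAhat, Matrix.mul_diagonal, Matrix.diagonal_mul]
      rw [hent]
      by_cases h0 : r.2.val = 0
      · have hx : x r = 0 := by
          have := h1 r.1 r.2 h0
          simpa using this
        simp [hx, h0]
      · have hdr : d r = c := by
          simp [hd, hc, rocDeg, h0]
        have hadj : rocAdj b q p r = if p.1 = r.1 ∧ p.2 ≠ r.2 then (1:ℝ) else 0 := by
          simp [rocAdj, h0]
        rw [hadj, hdr]
        by_cases hpr : p.1 = r.1 ∧ p.2 ≠ r.2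
        · simp [hpr, h0]; ring
        · have : ¬ (p.1 = r.1 ∧ p.2 ≠ r.2 ∧ r.2.val ≠ 0) := by tauto
          simp [hpr, this]
    have hmv : (rocAhat b q).mulVec x p = ∑ r : Fin q × Fin b,
        if p.1 = r.1 ∧ p.2 ≠ r.2 ∧ r.2.val ≠ 0 then d p * (c * x r) else 0 := by
      rw [Matrix.mulVec, dotProduct]
      exact Finset.sum_congr rfl fun r _ => key r
    rw [hmv, Fintype.sum_prod_type]
    have hcol : ∀ i : Fin q, ∑ a : Fin b,
        (if p.1 = i ∧ p.2 ≠ a ∧ a.val ≠ 0 then d p * (c * x (i, a)) else 0) =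
        if p.1 = i then ∑ a : Fin b, (if p.2 ≠ a ∧ a.val ≠ 0 then d p * (c * x (i, a)) else 0)
        else 0 := by
      intro i
      by_cases hi : p.1 = i
      · simp [hi]
      · simp [hi]
    rw [Finset.sum_congr rfl fun i _ => hcol i, Finset.sum_ite_eq Finset.univ p.1, if_pos (Finset.mem_univ _)]
    have hT : ∑ a : Fin b, (if p.2 ≠ a ∧ a.val ≠ 0 then d p * (c * x (p.1, a)) else 0) =
        d p * c * (∑ a ∈ Finset.univ.filter (fun a : Fin b => a.val ≠ 0),
          (if p.2 ≠ a then x (p.1, a) else 0)) := by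
      rw [Finset.mul_sum, Finset.sum_filter]
      apply Finset.sum_congr rfl
      intro a _
      by_cases h0a : (a : ℕ) = 0
      · simp [h0a]
      · by_cases h2a : p.2 = a
        · simp [h0a, h2a]
        · simp [h0a, h2a]
          ring
    rw [hT]
    by_cases hp0 : p.2.val = 0
    · have hall : ∀ a ∈ Finset.univ.filter (fun a : Fin b => a.val ≠ 0),
          (if p.2 ≠ a then x (p.1, a) else 0) = x (p.1, a) := by
        intro a ha
        simp only [Finset.mem_filter] at ha
        have : p.2 ≠ a := fun h => ha.2 (h ▸ hp0)
        simp [this]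
      rw [Finset.sum_congr rfl hall, h2 p.1]
      have hxp : x p = 0 := by
        have := h1 p.1 p.2 hp0
        simpa using this
      simp [hxp]
    · have hmem : p.2 ∈ Finset.univ.filter (fun a : Fin b => a.val ≠ 0) := by
        simp [hp0]
      have hsp : ∑ a ∈ Finset.univ.filter (fun a : Fin b => a.val ≠ 0),
          (if p.2 ≠ a then x (p.1, a) else 0) = - x p := by
        have : ∀ a ∈ Finset.univ.filter (fun a : Fin b => a.val ≠ 0),
            (if p.2 ≠ a then x (p.1, a) else 0) =
            x (p.1, a) - (if a = p.2 then x (p.1, a) else 0) := by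
          intro a _
          by_cases h : a = p.2
          · simp [h]
          · have : p.2 ≠ a := fun hh => h hh.symm
            simp [h, this]
        rw [Finset.sum_congr rfl this, Finset.sum_sub_distrib, h2 p.1,
          Finset.sum_ite_eq' _ p.2 (fun a => x (p.1, a)), if_pos hmem]
        simp
      rw [hsp]
      have hdp : d p = c := by
        simp [hd, hc, rocDeg, hp0]
      rw [hdp, hcc, Pi.smul_apply, smul_eq_mul]
      ring
  · set f : (i : Fin q) → ((Fin q × Fin b) → ℝ) →ₗ[ℝ] ℝ :=
      fun i => (LinearMap.proj (i, (⟨0, by omega⟩ : Fin b))) with hf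
    set g : (i : Fin q) → ((Fin q × Fin b) → ℝ) →ₗ[ℝ] ℝ :=
      fun i => ∑ a ∈ Finset.univ.filter (fun a : Fin b => a.val ≠ 0),
        (LinearMap.proj (i, a) : ((Fin q × Fin b) → ℝ) →ₗ[ℝ] ℝ) with hg
    set L : ((Fin q × Fin b) → ℝ) →ₗ[ℝ] (Fin q → ℝ) × (Fin q → ℝ) :=
      (LinearMap.pi f).prod (LinearMap.pi g) with hL
    have hker : LinearMap.ker L =
        (⨅ i : Fin q, LinearMap.ker (f i)) ⊓ (⨅ i : Fin q, LinearMap.ker (g i)) := by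
      rw [hL, LinearMap.ker_prod, LinearMap.ker_pi, LinearMap.ker_pi]
    have hsurj : Function.Surjective L := by
      rintro ⟨u, v⟩
      refine ⟨fun p => if p.2.val = 0 then u p.1 else if p.2.val = 1 then v p.1 else 0, ?_⟩
      refine Prod.ext ?_ ?_ <;> funext i <;> simp only [hL, LinearMap.prod_apply,
        LinearMap.pi_apply, Function.prod, hf, hg, LinearMap.proj_apply]
      · simp
      · rw [LinearMap.sum_apply]
        simp only [LinearMap.proj_apply]
        rw [Finset.sum_eq_single (⟨1, by omega⟩ : Fin b)]
        · simp
        · intro a ha hne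
          simp only [Finset.mem_filter] at ha
          have : a.val ≠ 1 := fun h => hne (Fin.ext h)
          simp [ha.2, this]
        · intro h
          exfalso; apply h; simp
    have hrange : LinearMap.range L = ⊤ := LinearMap.range_eq_top.mpr hsurj
    have hrn := LinearMap.finrank_range_add_finrank_ker L
    rw [hrange] at hrn
    rw [finrank_top] at hrn
    have h1 : Module.finrank ℝ ((Fin q → ℝ) × (Fin q → ℝ)) = q + q := by
      simp [Module.finrank_prod]
    have h2 : Module.finrank ℝ ((Fin q × Fin b) → ℝ) = q * b := by
      simp [Module.finrank_pi]
    rw [h1, h2] at hrn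
    rw [← hker]
    have : q * b = q * (b - 2) + 2 * q := by
      have e : q * b = q * ((b - 2) + 2) := by congr 1; omega
      rw [e, Nat.mul_add]; ring
    omega
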